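/- Let d ≥ 2, let μ be a probability measure on ℝ whose topological support equals [0,1], and let x, z ∈ ℝ^d be linearly independent. Then the two-point Mixup loss g is strictly convex on the linear span of {x, z}: for all θ₁ ≠ θ₂ in span{x, z} and all a ∈ (0,1), g(aθ₁ + (1−a)θ₂) < a·g(θ₁) + (1−a)·g(θ₂). -/

import Mathlib

open MeasureTheory
open scoped RealInnerProductSpace

/-- The logistic loss `ℓ(u) = log(1 + exp(-u))`. -/
noncomputable def logisticLoss (u : ℝ) : ℝ := Real.log (1 + Real.exp (-u))

/-- The two-point Mixup (logistic) loss for a linear classifier `θ`, where `x` has label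
`+1` and `z` has label `-1`:
`g(θ) = ∫ [λ ℓ(⟪θ, λx+(1-λ)z⟫) + (1-λ) ℓ(-⟪θ, λx+(1-λ)z⟫)] dμ(λ)`. -/
noncomputable def twoPointMixupLoss {d : ℕ} (μ : Measure ℝ)
    (x z θ : EuclideanSpace ℝ (Fin d)) : ℝ :=
  ∫ l, (l * logisticLoss ⟪θ, l • x + (1 - l) • z⟫ +
    (1 - l) * logisticLoss (-⟪θ, l • x + (1 - l) • z⟫)) ∂μ

lemma hasDerivAt_logisticLoss (u : ℝ) :
    HasDerivAt logisticLoss (-Real.exp (-u) / (1 + Real.exp (-u))) u := by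
  have h1 : HasDerivAt (fun v : ℝ => 1 + Real.exp (-v)) (-Real.exp (-u)) u := by
    have := ((Real.hasDerivAt_exp (-u)).comp u (hasDerivAt_neg u)).const_add 1
    simpa [Function.comp] using this
  have hpos : (0:ℝ) < 1 + Real.exp (-u) := by positivity
  show HasDerivAt (fun v : ℝ => Real.log (1 + Real.exp (-v))) _ u
  simpa [logisticLoss] using h1.log hpos.ne'

lemma hasDerivAt_logisticLoss' (u : ℝ) :
    HasDerivAt (fun v : ℝ => -Real.exp (-v) / (1 + Real.exp (-v)))
      ((Real.exp (-u) * (1 + Real.exp (-u)) - -Real.exp (-u) * -Real.exp (-u)) /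
        (1 + Real.exp (-u)) ^ 2) u := by
  have h1 : HasDerivAt (fun v : ℝ => 1 + Real.exp (-v)) (-Real.exp (-u)) u := by
    have := ((Real.hasDerivAt_exp (-u)).comp u (hasDerivAt_neg u)).const_add 1
    simpa [Function.comp] using this
  have hn : HasDerivAt (fun v : ℝ => -Real.exp (-v)) (Real.exp (-u)) u := by
    have := ((Real.hasDerivAt_exp (-u)).comp u (hasDerivAt_neg u)).neg
    simpa [Function.comp_def, Pi.neg_def] using this
  have hpos : (0:ℝ) < 1 + Real.exp (-u) := by positivity
  exact hn.div h1 hpos.ne'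

lemma continuous_logisticLoss : Continuous logisticLoss :=
  Differentiable.continuous fun u => (hasDerivAt_logisticLoss u).differentiableAt

lemma strictConvexOn_logisticLoss : StrictConvexOn ℝ Set.univ logisticLoss := by
  apply strictConvexOn_of_deriv2_pos convex_univ continuous_logisticLoss.continuousOn
  intro u _
  have hd1 : deriv logisticLoss = fun v : ℝ => -Real.exp (-v) / (1 + Real.exp (-v)) :=
    funext fun v => (hasDerivAt_logisticLoss v).deriv
  have : (deriv^[2] logisticLoss) u = deriv (deriv logisticLoss) u := rfl
  rw [this, hd1, (hasDerivAt_logisticLoss' u).deriv]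
  have h1 : (0:ℝ) < Real.exp (-u) := Real.exp_pos _
  have h2 : (0:ℝ) < 1 + Real.exp (-u) := by positivity
  have hnum : Real.exp (-u) * (1 + Real.exp (-u)) - -Real.exp (-u) * -Real.exp (-u)
      = Real.exp (-u) := by ring
  rw [hnum]
  positivity

lemma logisticLoss_neg (u : ℝ) : logisticLoss (-u) = logisticLoss u + u := by
  unfold logisticLoss
  have h : 1 + Real.exp u = Real.exp u * (1 + Real.exp (-u)) := by
    rw [mul_add, mul_one, ← Real.exp_add]
    simp [add_comm]
  rw [neg_neg, h, Real.log_mul (Real.exp_ne_zero u) (by positivity), Real.log_exp]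
  ring

theorem twoPointMixupLoss_strictConvexOn (d : ℕ) (hd : 2 ≤ d)
    (μ : Measure ℝ) [IsProbabilityMeasure μ]
    (hsupp_sub : μ (Set.Icc (0 : ℝ) 1)ᶜ = 0)
    (hsupp_full : ∀ l ∈ Set.Icc (0 : ℝ) 1, ∀ U : Set ℝ, IsOpen U → l ∈ U → μ U ≠ 0)
    (x z : EuclideanSpace ℝ (Fin d)) (hli : LinearIndependent ℝ ![x, z]) :
    StrictConvexOn ℝ (Submodule.span ℝ {x, z} : Set (EuclideanSpace ℝ (Fin d)))
      (twoPointMixupLoss μ x z) := by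
  classical
  refine ⟨(Submodule.span ℝ {x, z}).convex, ?_⟩
  intro θ₁ h₁ θ₂ h₂ hne a b ha hb hab
  set f : EuclideanSpace ℝ (Fin d) → ℝ → ℝ := fun θ l =>
    l * logisticLoss ⟪θ, l • x + (1 - l) • z⟫ +
      (1 - l) * logisticLoss (-⟪θ, l • x + (1 - l) • z⟫) with hf
  have hg : ∀ θ, twoPointMixupLoss μ x z θ = ∫ l, f θ l ∂μ := by
    intro θ
    simp only [hf, twoPointMixupLoss]
  have hfre : ∀ θ, ∀ l : ℝ, f θ l = logisticLoss ⟪θ, l • x + (1 - l) • z⟫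
      + (1 - l) * ⟪θ, l • x + (1 - l) • z⟫ := by
    intro θ l
    simp only [hf, logisticLoss_neg]
    ring
  have hip : ∀ l : ℝ, ⟪a • θ₁ + b • θ₂, l • x + (1 - l) • z⟫ =
      a * ⟪θ₁, l • x + (1 - l) • z⟫ + b * ⟪θ₂, l • x + (1 - l) • z⟫ := by
    intro l
    rw [inner_add_left, real_inner_smul_left, real_inner_smul_left]
  have hv : Continuous fun l : ℝ => l • x + (1 - l) • z :=
    (continuous_id.smul continuous_const).add ((continuous_const.sub continuous_id).smul continuous_const)
  have hcont : ∀ θ, Continuous (f θ) := by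
    intro θ
    have hipc : Continuous fun l : ℝ => ⟪θ, l • x + (1 - l) • z⟫ :=
      Continuous.inner continuous_const hv
    exact (continuous_id.mul (continuous_logisticLoss.comp hipc)).add
      (((continuous_const.sub continuous_id)).mul (continuous_logisticLoss.comp hipc.neg))
  have hres : μ.restrict (Set.Icc (0:ℝ) 1) = μ :=
    Measure.restrict_eq_self_of_ae_mem (by
      rw [MeasureTheory.ae_iff]
      simpa [Set.compl_def] using hsupp_sub)
  have hint : ∀ θ, Integrable (f θ) μ := by
    intro θ
    rw [← hres]
    exact ContinuousOn.integrableOn_compact isCompact_Icc (hcont θ).continuousOn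
  have key : ∀ l : ℝ, a * f θ₁ l + b * f θ₂ l - f (a • θ₁ + b • θ₂) l
      = a * logisticLoss ⟪θ₁, l • x + (1 - l) • z⟫
        + b * logisticLoss ⟪θ₂, l • x + (1 - l) • z⟫
        - logisticLoss (a * ⟪θ₁, l • x + (1 - l) • z⟫ + b * ⟪θ₂, l • x + (1 - l) • z⟫) := by
    intro l
    rw [hfre, hfre, hfre, hip]
    ring
  have hconv := strictConvexOn_logisticLoss.convexOn
  have hnonneg : ∀ l : ℝ, 0 ≤ a * f θ₁ l + b * f θ₂ l - f (a • θ₁ + b • θ₂) l := by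
    intro l
    rw [key l]
    have := hconv.2 (Set.mem_univ ⟪θ₁, l • x + (1 - l) • z⟫)
      (Set.mem_univ ⟪θ₂, l • x + (1 - l) • z⟫) ha.le hb.le hab
    simp only [smul_eq_mul] at this
    linarith
  set w := θ₁ - θ₂ with hw
  have hwne : w ≠ 0 := sub_ne_zero.2 hne
  have hipw : ∀ l : ℝ, ⟪w, l • x + (1 - l) • z⟫ =
      ⟪θ₁, l • x + (1 - l) • z⟫ - ⟪θ₂, l • x + (1 - l) • z⟫ := fun l => inner_sub_left _ _ _
  have hpos : ∀ l : ℝ, ⟪w, l • x + (1 - l) • z⟫ ≠ 0 →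
      0 < a * f θ₁ l + b * f θ₂ l - f (a • θ₁ + b • θ₂) l := by
    intro l hl
    rw [key l]
    have hune : ⟪θ₁, l • x + (1 - l) • z⟫ ≠ ⟪θ₂, l • x + (1 - l) • z⟫ := by
      intro h; apply hl; rw [hipw l, h, sub_self]
    have := strictConvexOn_logisticLoss.2 (Set.mem_univ _) (Set.mem_univ _) hune ha hb hab
    simp only [smul_eq_mul] at this
    linarith
  have hwspan : w ∈ Submodule.span ℝ ({x, z} : Set (EuclideanSpace ℝ (Fin d))) :=
    sub_mem h₁ h₂
  obtain ⟨c₁, c₂, hc⟩ := Submodule.mem_span_pair.1 hwspan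
  have hkey2 : ⟪w, x⟫ ≠ 0 ∨ ⟪w, z⟫ ≠ 0 := by
    by_contra hcon
    push_neg at hcon
    apply hwne
    have h1 : ⟪w, c₁ • x + c₂ • z⟫ = c₁ * ⟪w, x⟫ + c₂ * ⟪w, z⟫ := by
      rw [inner_add_right, real_inner_smul_right, real_inner_smul_right]
    have hww : ⟪w, w⟫ = c₁ * ⟪w, x⟫ + c₂ * ⟪w, z⟫ := by rw [← h1, hc]
    exact inner_self_eq_zero.1 (by rw [hww, hcon.1, hcon.2]; ring)
  set U : Set ℝ := {l | ⟪w, l • x + (1 - l) • z⟫ ≠ 0} with hU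
  have hUopen : IsOpen U := by
    have hc2 : Continuous fun l : ℝ => ⟪w, l • x + (1 - l) • z⟫ :=
      Continuous.inner continuous_const hv
    exact isOpen_compl_singleton.preimage hc2
  have hlU : ∃ l₁ ∈ Set.Icc (0:ℝ) 1, l₁ ∈ U := by
    rcases hkey2 with h | h
    · refine ⟨1, by norm_num, ?_⟩
      simpa [hU] using h
    · refine ⟨0, by norm_num, ?_⟩
      simpa [hU] using h
  obtain ⟨l₁, hl₁, hl₁U⟩ := hlU
  have hμU : μ U ≠ 0 := hsupp_full l₁ hl₁ U hUopen hl₁U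
  set D : ℝ → ℝ := fun l => a * f θ₁ l + b * f θ₂ l - f (a • θ₁ + b • θ₂) l with hD
  have hDint : Integrable D μ :=
    (((hint θ₁).const_mul a).add ((hint θ₂).const_mul b)).sub (hint _)
  have hDpos : 0 < ∫ l, D l ∂μ := by
    rw [integral_pos_iff_support_of_nonneg_ae (Filter.Eventually.of_forall hnonneg) hDint]
    have hsub : U ⊆ Function.support D := fun l hl => Function.mem_support.2 (hpos l hl).ne'
    exact lt_of_lt_of_le (pos_iff_ne_zero.2 hμU) (measure_mono hsub)
  have heq : ∫ l, D l ∂μ = a * (∫ l, f θ₁ l ∂μ) + b * (∫ l, f θ₂ l ∂μ)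
      - ∫ l, f (a • θ₁ + b • θ₂) l ∂μ := by
    have hintA : Integrable (fun l => a * f θ₁ l) μ := (hint θ₁).const_mul a
    have hintB : Integrable (fun l => b * f θ₂ l) μ := (hint θ₂).const_mul b
    have hintAB : Integrable (fun l => a * f θ₁ l + b * f θ₂ l) μ := hintA.add hintB
    simp only [hD]
    rw [integral_sub hintAB (hint _), integral_add hintA hintB,
        integral_const_mul, integral_const_mul]
  rw [heq] at hDpos
  simp only [hg, smul_eq_mul]
  linarith
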